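/- arXiv:0812.1765 — 2 statements merged into one kernel-verified Lean document; each statement's English description precedes it below -/
import Mathlib

section
/- Suppose C: ℤ^d → ℝ is given by a sum C(x) = Σ_{j=1}^∞ Γ_j(x) where each Γ_j satisfies Γ_j(x) = 0 for |x| ≥ L^j/2 and |Γ_j(x)| ≤ c_0 L^{-(d-2)(j-1)} with L ≥ 3. Then there is a constant C_L such that |C(x)| ≤ C_L (1+|x|)^{-(d-2)} for all x ∈ ℤ^d. -/
/-- If `C(x) = ∑_{j≥1} Γ_j(x)` with `Γ_j(x) = 0` for `|x| ≥ L^j/2` and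
`|Γ_j(x)| ≤ c₀ L^{-(d-2)(j-1)}`, then `|C(x)| ≤ C_L (1+|x|)^{-(d-2)}`. -/
theorem stmt4 (d L : ℕ) (hd : 3 ≤ d) (hL : 3 ≤ L) (c0 : ℝ)
    (Γ : ℕ → (Fin d → ℤ) → ℝ) (C : (Fin d → ℤ) → ℝ)
    (hrange : ∀ j, 1 ≤ j → ∀ x : Fin d → ℤ, ((L : ℝ) ^ j) / 2 ≤ ‖x‖ → Γ j x = 0)
    (hbound : ∀ j, 1 ≤ j → ∀ x : Fin d → ℤ, |Γ j x| ≤ c0 * (((L : ℝ) ^ ((d - 2) * (j - 1)))⁻¹))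
    (hsum : ∀ x, HasSum (fun j : ℕ => Γ (j + 1) x) (C x)) :
    ∃ CL : ℝ, ∀ x : Fin d → ℤ, |C x| ≤ CL * (((1 + ‖x‖) ^ (d - 2))⁻¹) := by
  have hL3 : (3:ℝ) ≤ (L:ℝ) := by exact_mod_cast hL
  have hL1 : (1:ℝ) < (L:ℝ) := by linarith
  have hd2 : 1 ≤ d - 2 := by omega
  have hLd3 : (3:ℝ) ≤ (L:ℝ) ^ (d - 2) := le_trans hL3 (le_self_pow₀ (by linarith) (by omega))
  set r : ℝ := ((L:ℝ) ^ (d - 2))⁻¹ with hr_def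
  have hr0 : 0 ≤ r := inv_nonneg.mpr (by positivity)
  have hr3 : r ≤ 1/3 := by
    rw [hr_def]
    rw [inv_le_comm₀ (by linarith) (by norm_num)]
    simpa using hLd3
  have hr1 : r < 1 := by linarith
  have hc0 : 0 ≤ c0 := by
    have := hbound 1 le_rfl 0
    have h1 : ((L:ℝ) ^ ((d - 2) * (1 - 1)))⁻¹ = 1 := by norm_num
    rw [h1, mul_one] at this
    exact le_trans (abs_nonneg _) this
  -- key: |Γ (i+1) x| ≤ c0 * r ^ i
  have key : ∀ (i : ℕ) (x : Fin d → ℤ), |Γ (i+1) x| ≤ c0 * r ^ i := by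
    intro i x
    have := hbound (i+1) (by omega) x
    have h1 : ((L:ℝ) ^ ((d - 2) * ((i+1) - 1)))⁻¹ = r ^ i := by
      have he : (d - 2) * ((i+1) - 1) = (d - 2) * i := by simp
      rw [he, pow_mul, ← inv_pow]
    rwa [h1] at this
  refine ⟨2 * c0 * (L:ℝ) ^ (d - 2), fun x => ?_⟩
  have hx1 : (1:ℝ) ≤ 1 + ‖x‖ := by have := norm_nonneg x; linarith
  have hxpow : (0:ℝ) < (1 + ‖x‖) ^ (d - 2) := by positivity
  have hsummable : Summable (fun j : ℕ => |Γ (j+1) x|) :=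
    Summable.of_nonneg_of_le (fun j => abs_nonneg _) (fun j => key j x)
      ((summable_geometric_of_lt_one hr0 hr1).mul_left c0)
  by_cases hall : ∀ j : ℕ, Γ (j+1) x = 0
  · have hC0 : C x = 0 := by
      have : HasSum (fun j : ℕ => Γ (j+1) x) 0 := by
        have : (fun j : ℕ => Γ (j+1) x) = fun _ => 0 := funext fun j => hall j
        rw [this]; exact hasSum_zero
      exact (hsum x).unique this
    rw [hC0, abs_zero]
    positivity
  · push_neg at hall
    set k := Nat.find hall with hk_def
    have hk : Γ (k+1) x ≠ 0 := Nat.find_spec hall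
    have hmin : ∀ i, i < k → Γ (i+1) x = 0 := fun i hi => by
      by_contra h
      have h2 : k ≤ i := hk_def ▸ Nat.find_le h
      omega
    -- 1 + ‖x‖ ≤ L^(k+1)
    have hxk : 1 + ‖x‖ ≤ (L:ℝ) ^ (k+1) := by
      have hnot : ¬ ((L:ℝ) ^ (k+1) / 2 ≤ ‖x‖) := fun h => hk (hrange (k+1) (by omega) x h)
      push_neg at hnot
      have hLk : (3:ℝ) ≤ (L:ℝ) ^ (k+1) := le_trans hL3 (le_self_pow₀ (by linarith) (by omega))
      linarith
    -- r^k ≤ L^(d-2) * ((1+‖x‖)^(d-2))⁻¹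
    have hrk : r ^ k ≤ (L:ℝ) ^ (d-2) * (((1 + ‖x‖) ^ (d-2))⁻¹) := by
      have h1 : (1 + ‖x‖) ^ (d-2) ≤ ((L:ℝ) ^ (d-2)) ^ (k+1) := by
        calc (1 + ‖x‖) ^ (d-2) ≤ ((L:ℝ) ^ (k+1)) ^ (d-2) :=
              pow_le_pow_left₀ (by linarith) hxk _
          _ = ((L:ℝ) ^ (d-2)) ^ (k+1) := by rw [← pow_mul, ← pow_mul, Nat.mul_comm]
      have h2 : (((L:ℝ) ^ (d-2)) ^ (k+1))⁻¹ ≤ ((1 + ‖x‖) ^ (d-2))⁻¹ :=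
        inv_anti₀ hxpow h1
      calc r ^ k = (L:ℝ) ^ (d-2) * (((L:ℝ) ^ (d-2)) ^ (k+1))⁻¹ := by
            rw [hr_def, ← inv_pow]
            field_simp
            rw [pow_succ, ← mul_assoc, ← mul_pow, ← mul_pow, one_div, inv_mul_cancel₀ (ne_of_gt (by linarith)), one_pow, one_pow, one_mul]
        _ ≤ (L:ℝ) ^ (d-2) * ((1 + ‖x‖) ^ (d-2))⁻¹ :=
            mul_le_mul_of_nonneg_left h2 (by positivity)
    -- |C x| ≤ ∑' |Γ (j+1) x|
    have habs : |C x| ≤ ∑' j : ℕ, |Γ (j+1) x| := by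
      rw [← (hsum x).tsum_eq]
      have h := norm_tsum_le_tsum_norm (f := fun j : ℕ => Γ (j+1) x)
        (by simpa [Real.norm_eq_abs] using hsummable)
      simpa [Real.norm_eq_abs] using h
    -- split the sum
    have hsplit : ∑' j : ℕ, |Γ (j+1) x| = ∑' i : ℕ, |Γ (i + k + 1) x| := by
      rw [← Summable.sum_add_tsum_nat_add k hsummable]
      have : ∑ i ∈ Finset.range k, |Γ (i+1) x| = 0 :=
        Finset.sum_eq_zero fun i hi => by
          rw [hmin i (Finset.mem_range.mp hi), abs_zero]
      simp only [this, zero_add]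
    have htail : ∑' i : ℕ, |Γ (i + k + 1) x| ≤ c0 * r ^ k * (1 - r)⁻¹ := by
      have hb : ∀ i : ℕ, |Γ (i + k + 1) x| ≤ (c0 * r ^ k) * r ^ i := by
        intro i
        have := key (i + k) x
        calc |Γ (i + k + 1) x| ≤ c0 * r ^ (i + k) := this
          _ = (c0 * r ^ k) * r ^ i := by rw [pow_add]; ring
      calc ∑' i : ℕ, |Γ (i + k + 1) x| ≤ ∑' i : ℕ, (c0 * r ^ k) * r ^ i :=
            Summable.tsum_le_tsum hb
              (Summable.of_nonneg_of_le (fun i => abs_nonneg _) hb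
                ((summable_geometric_of_lt_one hr0 hr1).mul_left _))
              ((summable_geometric_of_lt_one hr0 hr1).mul_left _)
        _ = (c0 * r ^ k) * (1 - r)⁻¹ := by
            rw [tsum_mul_left, tsum_geometric_of_lt_one hr0 hr1]
    have hgeo : (1 - r)⁻¹ ≤ 2 := by
      rw [inv_le_comm₀ (by linarith) (by norm_num)]
      linarith
    calc |C x| ≤ c0 * r ^ k * (1 - r)⁻¹ := by
          rw [hsplit] at habs; linarith
      _ ≤ c0 * r ^ k * 2 := by
          apply mul_le_mul_of_nonneg_left hgeo (by positivity)
      _ = 2 * c0 * r ^ k := by ring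
      _ ≤ 2 * c0 * ((L:ℝ) ^ (d-2) * (((1 + ‖x‖) ^ (d-2))⁻¹)) :=
          mul_le_mul_of_nonneg_left hrk (by positivity)
      _ = 2 * c0 * (L:ℝ) ^ (d-2) * (((1 + ‖x‖) ^ (d-2))⁻¹) := by ring
end

section
/- Let (Π(x))_{x∈ℤ^d} be a function satisfying |Π(x)| ≤ C(1+|x|)^{-d}. Then for every n ≥ 2, the sum a_n = Σ_{x_2,...,x_n ∈ ℤ^d} Π(-x_2) Π(x_2-x_3) ⋯ Π(x_n) converges absolutely. -/
/-- Access the `i`-th chain variable (out of `m` of them), with junk value `0` out of range. -/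
def chainVar {d m : ℕ} (v : Fin m → (Fin d → ℤ)) (i : ℕ) : Fin d → ℤ :=
  if h : i < m then v ⟨i, h⟩ else 0


open Finset

private lemma auxNat {q : ℝ} (hq : 1 < q) :
    Summable fun n : ℕ => (1 + (n : ℝ)) ^ (-q) := by
  have h := (Real.summable_one_div_nat_add_rpow 1 q).mpr hq
  refine h.congr fun n => ?_
  rw [Real.rpow_neg (by positivity), ← one_div, abs_of_nonneg (by positivity), add_comm]

private lemma auxInt {q : ℝ} (hq : 1 < q) :
    Summable fun n : ℤ => (1 + ‖n‖) ^ (-q) := by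
  have h := auxNat hq
  apply Summable.of_nat_of_neg
  · exact h.congr fun n => by push_cast [Int.norm_eq_abs]; norm_num
  · exact h.congr fun n => by push_cast [Int.norm_eq_abs]; norm_num

private lemma auxPiProd {X : Type*} {g : X → ℝ} (hg : Summable g) (hg0 : ∀ x, 0 ≤ g x)
    (n : ℕ) : Summable fun w : Fin n → X => ∏ i, g (w i) := by
  induction n with
  | zero =>
    haveI : Finite (Fin 0 → X) := Finite.of_subsingleton
    exact Summable.of_finite
  | succ n ih =>
    have h2 := hg.mul_of_nonneg ih hg0
      (fun w => Finset.prod_nonneg fun i _ => hg0 _)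
    exact ((Fin.consEquiv fun _ => X).symm.summable_iff.mpr h2).congr
      fun w => (Fin.prod_univ_succ fun i => g (w i)).symm

private lemma auxPiSum {d : ℕ} (hd : 1 ≤ d) {p : ℝ} (hp : (d : ℝ) < p) :
    Summable fun x : Fin d → ℤ => (1 + ‖x‖) ^ (-p) := by
  have hd0 : (0 : ℝ) < d := by exact_mod_cast hd
  have hq : 1 < p / d := (one_lt_div hd0).mpr hp
  have hgs : Summable fun t : ℤ => (1 + ‖t‖) ^ (-(p / d)) := auxInt hq
  have hG := auxPiProd hgs (fun t => Real.rpow_nonneg (by positivity) _) d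
  refine hG.of_nonneg_of_le (fun x => Real.rpow_nonneg (by positivity) _) (fun x => ?_)
  have hx : (0:ℝ) < 1 + ‖x‖ := by positivity
  have key : ∏ i, (1 + ‖x i‖) ^ (p / d) ≤ (1 + ‖x‖) ^ p := by
    calc ∏ i, (1 + ‖x i‖) ^ (p / d)
        ≤ ∏ i : Fin d, (1 + ‖x‖) ^ (p / d) := by
          refine Finset.prod_le_prod (fun i _ => Real.rpow_nonneg (by positivity) _)
            (fun i _ => Real.rpow_le_rpow (by positivity) ?_ (by positivity))
          linarith [norm_le_pi_norm x i]
      _ = ((1 + ‖x‖) ^ (p / d)) ^ (d : ℕ) := by rw [Finset.prod_const, Finset.card_univ,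
            Fintype.card_fin]
      _ = (1 + ‖x‖) ^ p := by
          rw [← Real.rpow_natCast ((1 + ‖x‖) ^ (p / d)) d, ← Real.rpow_mul hx.le]
          congr 1
          field_simp
  have h2 : (1 + ‖x‖) ^ (-p) = ((1 + ‖x‖) ^ p)⁻¹ := Real.rpow_neg hx.le _
  have h3 : ∏ i, (1 + ‖x i‖) ^ (-(p / d)) = (∏ i, (1 + ‖x i‖) ^ (p / d))⁻¹ := by
    rw [← Finset.prod_inv_distrib]
    exact Finset.prod_congr rfl fun i _ => Real.rpow_neg (by positivity) _
  rw [h2, h3]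
  exact inv_anti₀ (Finset.prod_pos fun i _ => Real.rpow_pos_of_pos (by positivity) _) key


private def chainZ {d m : ℕ} (v : Fin m → Fin d → ℤ) (k : ℕ) : Fin d → ℤ :=
  if k = 0 then -(chainVar v 0)
  else if k = m then chainVar v (m - 1)
  else chainVar v (k - 1) - chainVar v k

private lemma chainZ_inj {d m : ℕ} (hm : 1 ≤ m) {j : ℕ} (hj : j ≤ m) :
    Function.Injective (fun (v : Fin m → Fin d → ℤ) (i : Fin m) =>
      chainZ v (if (i : ℕ) < j then (i : ℕ) else (i : ℕ) + 1)) := by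
  intro v w h
  have hz : ∀ k, k ≤ m → k ≠ j → chainZ v k = chainZ w k := by
    intro k hk hkj
    rcases lt_or_ge k j with hlt | hge
    · have hkm : k < m := lt_of_lt_of_le hlt hj
      have h1 := congrFun h ⟨k, hkm⟩
      simpa [hlt] using h1
    · have hk1 : j < k := lt_of_le_of_ne hge (Ne.symm hkj)
      have hk2 : k - 1 < m := by omega
      have h1 := congrFun h ⟨k - 1, hk2⟩
      have hnotlt : ¬ (k - 1 < j) := by omega
      simpa [hnotlt, Nat.sub_add_cancel (by omega : 1 ≤ k)] using h1
  have hzval : ∀ k, 1 ≤ k → k < m → k ≠ j →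
      chainVar v (k - 1) - chainVar v k = chainVar w (k - 1) - chainVar w k := by
    intro k h1 h2 h3
    have h4 := hz k (le_of_lt h2) h3
    simp only [chainZ, if_neg (show ¬ k = 0 by omega), if_neg (show ¬ k = m by omega)] at h4
    exact h4
  have hfwd : ∀ i, i < j → chainVar v i = chainVar w i := by
    intro i
    induction i with
    | zero =>
      intro h0
      have h1 := hz 0 (by omega) (by omega)
      simpa [chainZ] using h1
    | succ i ih =>
      intro hsj
      have hvi := ih (by omega)
      have h1 := hzval (i + 1) (by omega) (by omega) (by omega)
      simp only [Nat.add_sub_cancel] at h1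
      rw [hvi] at h1
      exact sub_right_inj.mp h1
  have hbwd : ∀ t i, i + t = m - 1 → j ≤ i → chainVar v i = chainVar w i := by
    intro t
    induction t with
    | zero =>
      intro i hi hji
      have h1 := hz m le_rfl (by omega)
      have hm0 : ¬ m = 0 := by omega
      simp only [chainZ, hm0, if_false, if_neg hm0, if_pos rfl] at h1
      have : i = m - 1 := by omega
      rw [this]
      exact h1
    | succ t ih =>
      intro i hi hji
      have hnext := ih (i + 1) (by omega) (by omega)
      have h1 := hzval (i + 1) (by omega) (by omega) (by omega)
      simp only [Nat.add_sub_cancel] at h1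
      rw [hnext] at h1
      exact sub_left_inj.mp h1
  funext i
  have key : chainVar v (i : ℕ) = chainVar w (i : ℕ) := by
    rcases lt_or_ge (i : ℕ) j with hlt | hge
    · exact hfwd i hlt
    · exact hbwd (m - 1 - (i : ℕ)) (i : ℕ) (by omega) hge
  simpa [chainVar, i.isLt] using key
/-- If `|Π(x)| ≤ c (1+|x|)^{-d}`, then for every `n ≥ 2` the chain sum
`a_n = ∑_{x₂,…,x_n} Π(-x₂) Π(x₂-x₃) ⋯ Π(x_{n-1}-x_n) Π(x_n)` converges absolutely.
(Here `m = n - 1 ≥ 1` is the number of summation variables `v 0 = x₂, …, v (m-1) = x_n`.) -/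
theorem stmt6 (d : ℕ) (hd : 1 ≤ d) (c : ℝ) (Pk : (Fin d → ℤ) → ℝ)
    (hPk : ∀ x : Fin d → ℤ, |Pk x| ≤ c * (1 + ‖x‖) ^ (-(d : ℝ)))
    (m : ℕ) (hm : 1 ≤ m) :
    Summable (fun v : Fin m → (Fin d → ℤ) =>
      |Pk (-(chainVar v 0)) *
          (∏ i ∈ Finset.range (m - 1), Pk (chainVar v i - chainVar v (i + 1))) *
          Pk (chainVar v (m - 1))|) := by
  classical
  obtain ⟨m', rfl⟩ : ∃ k, m = k + 1 := ⟨m - 1, by omega⟩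
  set m := m' + 1 with hmdef
  -- constants
  set c' : ℝ := max c 0 with hc'
  have hc0 : 0 ≤ c' := le_max_right _ _
  have hPk' : ∀ x : Fin d → ℤ, |Pk x| ≤ c' * (1 + ‖x‖) ^ (-(d : ℝ)) := fun x =>
    (hPk x).trans (mul_le_mul_of_nonneg_right (le_max_left _ _)
      (Real.rpow_nonneg (by positivity) _))
  have hm0 : (0 : ℝ) < m := by positivity
  set p : ℝ := (d : ℝ) + (d : ℝ) / m with hpdef
  have hdp : (d : ℝ) < p := by
    have h1 : 0 < (d : ℝ) / m := div_pos (by exact_mod_cast hd) hm0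
    rw [hpdef]; linarith
  have hF : Summable (fun x : Fin d → ℤ => (1 + ‖x‖) ^ (-p)) := auxPiSum hd hdp
  have hFnn : ∀ x : Fin d → ℤ, (0:ℝ) ≤ (1 + ‖x‖) ^ (-p) := fun x =>
    Real.rpow_nonneg (by positivity) _
  -- bounding functions
  set B : ℕ → (Fin m → Fin d → ℤ) → ℝ := fun j v =>
    ∏ i ∈ range m, (1 + ‖chainZ v (if i < j then i else i + 1)‖) ^ (-p) with hBdef
  have hBnn : ∀ j v, 0 ≤ B j v := fun j v =>
    Finset.prod_nonneg fun i _ => hFnn _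
  have hBsum : ∀ j ≤ m, Summable (B j) := by
    intro j hj
    have hG := auxPiProd hF hFnn m
    refine (hG.comp_injective (chainZ_inj (by omega) hj)).congr fun v => ?_
    exact Fin.prod_univ_eq_prod_range
      (fun i => (1 + ‖chainZ v (if i < j then i else i + 1)‖) ^ (-p)) m
  -- pointwise bound
  have hbound : ∀ v : Fin m → Fin d → ℤ,
      |Pk (-(chainVar v 0)) *
          (∏ i ∈ Finset.range (m - 1), Pk (chainVar v i - chainVar v (i + 1))) *
          Pk (chainVar v (m - 1))|
        ≤ ∑ j ∈ range (m + 1), c' ^ (m + 1) * B j v := by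
    intro v
    set a : ℕ → ℝ := fun k => 1 + ‖chainZ v k‖ with hadef
    have ha : ∀ k, (0:ℝ) < a k := fun k => by positivity
    set f : ℕ → ℝ := fun k => c' * a k ^ (-(d : ℝ)) with hfdef
    have hfnn : ∀ k, 0 ≤ f k := fun k => mul_nonneg hc0 (Real.rpow_nonneg (ha k).le _)
    -- step 1 : |term| ≤ ∏_{k ∈ range (m+1)} f k
    have hZ0 : chainZ v 0 = -(chainVar v 0) := by simp [chainZ]
    have hZm : chainZ v m = chainVar v (m - 1) := by
      simp [chainZ, show ¬ m = 0 by omega]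
    have hZi : ∀ i, i < m - 1 → chainZ v (i + 1) = chainVar v i - chainVar v (i + 1) := by
      intro i hi
      simp [chainZ, show ¬ i + 1 = m by omega]
    have step1 : |Pk (-(chainVar v 0)) *
          (∏ i ∈ Finset.range (m - 1), Pk (chainVar v i - chainVar v (i + 1))) *
          Pk (chainVar v (m - 1))| ≤ ∏ k ∈ range (m + 1), f k := by
      have hsplit : ∏ k ∈ range (m + 1), f k
          = f 0 * (∏ i ∈ range (m - 1), f (i + 1)) * f m := by
        rw [Finset.prod_range_succ, hmdef, Finset.prod_range_succ']
        ring_nf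
        rw [show 1 + m' - 1 = m' by omega]
        ring
      rw [hsplit, abs_mul, abs_mul, Finset.abs_prod]
      have h1 : |Pk (-(chainVar v 0))| ≤ f 0 := by rw [hfdef]; simp only [hadef, hZ0]; exact hPk' _
      have h3 : |Pk (chainVar v (m - 1))| ≤ f m := by
        rw [hfdef]; simp only [hadef, hZm]; exact hPk' _
      have h2 : ∏ i ∈ range (m - 1), |Pk (chainVar v i - chainVar v (i + 1))|
          ≤ ∏ i ∈ range (m - 1), f (i + 1) := by
        refine Finset.prod_le_prod (fun i _ => abs_nonneg _) (fun i hi => ?_)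
        rw [hfdef]; simp only [hadef, hZi i (Finset.mem_range.mp hi)]; exact hPk' _
      have := mul_le_mul (mul_le_mul h1 h2 (Finset.prod_nonneg fun i _ => abs_nonneg _)
        (hfnn 0)) h3 (abs_nonneg _) (mul_nonneg (hfnn 0) (Finset.prod_nonneg fun i _ => hfnn _))
      exact this
    -- choose maximizing index
    obtain ⟨j, hjmem, hjmax⟩ := Finset.exists_max_image (range (m + 1))
      (fun k => ‖chainZ v k‖) ⟨0, by simp⟩
    have hjle : j ≤ m := by have := Finset.mem_range.mp hjmem; omega
    -- step 2 : ∏ f ≤ c'^(m+1) * B j v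
    have step2 : ∏ k ∈ range (m + 1), f k ≤ c' ^ (m + 1) * B j v := by
      have hconst : ∏ k ∈ range (m + 1), f k
          = c' ^ (m + 1) * ∏ k ∈ range (m + 1), a k ^ (-(d : ℝ)) := by
        rw [hfdef, Finset.prod_mul_distrib, Finset.prod_const, Finset.card_range]
      rw [hconst]
      refine mul_le_mul_of_nonneg_left ?_ (by positivity)
      -- split off j
      rw [← Finset.mul_prod_erase _ _ hjmem]
      have hcard : ((range (m + 1)).erase j).card = m := by
        rw [Finset.card_erase_of_mem hjmem, Finset.card_range]
        omega
      have hkey : a j ^ (-(d : ℝ))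
          ≤ ∏ k ∈ (range (m + 1)).erase j, a k ^ (-(d : ℝ) / m) := by
        calc a j ^ (-(d : ℝ))
            = (a j ^ (-(d : ℝ) / m)) ^ (m : ℕ) := by
              rw [← Real.rpow_natCast (a j ^ (-(d : ℝ) / m)) m, ← Real.rpow_mul (ha j).le]
              congr 1
              field_simp
          _ = ∏ k ∈ (range (m + 1)).erase j, a j ^ (-(d : ℝ) / m) := by
              rw [Finset.prod_const, hcard]
          _ ≤ ∏ k ∈ (range (m + 1)).erase j, a k ^ (-(d : ℝ) / m) := by
              refine Finset.prod_le_prod (fun k _ => Real.rpow_nonneg (ha j).le _)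
                (fun k hk => ?_)
              refine Real.rpow_le_rpow_of_nonpos (ha k) ?_ ?_
              swap
              · rw [neg_div]
                exact neg_nonpos.mpr (by positivity)
              have := hjmax k (Finset.mem_of_mem_erase hk)
              simp only [hadef]; linarith
      calc a j ^ (-(d : ℝ)) * ∏ k ∈ (range (m + 1)).erase j, a k ^ (-(d : ℝ))
          ≤ (∏ k ∈ (range (m + 1)).erase j, a k ^ (-(d : ℝ) / m)) *
            ∏ k ∈ (range (m + 1)).erase j, a k ^ (-(d : ℝ)) := by
            refine mul_le_mul_of_nonneg_right hkey
              (Finset.prod_nonneg fun k _ => Real.rpow_nonneg (ha k).le _)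
        _ = ∏ k ∈ (range (m + 1)).erase j, a k ^ (-p) := by
            rw [← Finset.prod_mul_distrib]
            refine Finset.prod_congr rfl fun k _ => ?_
            rw [← Real.rpow_add (ha k)]
            congr 1
            rw [hpdef]
            field_simp
            ring
        _ = B j v := by
            rw [hBdef]
            refine (Finset.prod_bij' (fun i _ => if i < j then i else i + 1)
              (fun k _ => if k < j then k else k - 1) ?_ ?_ ?_ ?_ ?_).symm
            · intro i hi
              simp only [Finset.mem_range] at hi
              simp only [Finset.mem_erase, Finset.mem_range]
              split_ifs <;> omega
            · intro k hk
              simp only [Finset.mem_erase, Finset.mem_range] at hk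
              simp only [Finset.mem_range]
              split_ifs <;> omega
            · intro i hi
              simp only [Finset.mem_range] at hi
              split_ifs <;> omega
            · intro k hk
              simp only [Finset.mem_erase, Finset.mem_range] at hk
              split_ifs <;> omega
            · intro i hi
              rfl
    refine (step1.trans step2).trans ?_
    exact Finset.single_le_sum (f := fun j => c' ^ (m + 1) * B j v)
      (fun k _ => mul_nonneg (by positivity) (hBnn k v)) hjmem
  -- assemble
  refine Summable.of_nonneg_of_le (fun v => abs_nonneg _) hbound ?_
  refine summable_sum fun j hj => ?_
  exact ((hBsum j (by have := Finset.mem_range.mp hj; omega)).mul_left _)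
end
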